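/- Let (X, B) be a symplectic space (possibly degenerate) and s ⊆ X a subspace. The unitary constraint set {δ_f : f ∈ s} in the CCR algebra over (X,B) is first class (admits a Dirac state) if s is contained in its symplectic commutant s' = {f ∈ X : B(f, s) = 0}; indeed the central state ω₀ is then a Dirac state, since ω₀((δ_f - 1)*(δ_f - 1)) = 0 for f ∈ s requires B(f,g)-commutation relations to give δ_f central on the relevant subalgebra. -/

import Mathlib

/-- Twisted (Weyl) product on `Δ(X,B)`: `δ_f ⬝ δ_h = e^{(i/2) B(f,h)} δ_{f+h}`. -/
noncomputable def weylMul {X : Type*} [AddCommGroup X] (B : X → X → ℝ)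
    (a b : X →₀ ℂ) : X →₀ ℂ :=
  a.sum fun f c => b.sum fun g d =>
    Finsupp.single (f + g) (c * d * Complex.exp (Complex.I * (B f g : ℂ) / 2))

/-- Involution on `Δ(X,B)`: `(δ_f)* = δ_{-f}` (antilinearly extended). -/
noncomputable def weylStar {X : Type*} [AddCommGroup X] (a : X →₀ ℂ) : X →₀ ℂ :=
  a.sum fun f c => Finsupp.single (-f) (starRingEnd ℂ c)

/-- The ℓ¹ norm. -/
noncomputable def l1Norm {X : Type*} (a : X →₀ ℂ) : ℝ := a.sum fun _ c => ‖c‖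

/-- A state on `Δ₁(X,B)`: normalized, positive for the twisted product, ℓ¹-contractive. -/
def IsStateW {X : Type*} [AddCommGroup X] (B : X → X → ℝ)
    (ω : (X →₀ ℂ) →ₗ[ℂ] ℂ) : Prop :=
  ω (Finsupp.single 0 1) = 1 ∧
  (∀ a : X →₀ ℂ, ∃ r : ℝ, 0 ≤ r ∧ ω (weylMul B (weylStar a) a) = (r : ℂ)) ∧
  ∀ a : X →₀ ℂ, ‖ω a‖ ≤ l1Norm a

/-- Rewriting of the Weyl product `a* ⬝ a` as a double sum over the support of `a`. -/
theorem weylMul_star_eq {X : Type*} [AddCommGroup X] (B : X → X → ℝ) (a : X →₀ ℂ) :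
    weylMul B (weylStar a) a = a.sum fun f c => a.sum fun g d =>
      Finsupp.single (g - f)
        ((starRingEnd ℂ c) * d * Complex.exp (Complex.I * (B (-f) g : ℂ) / 2)) := by
  rw [weylMul, weylStar, Finsupp.sum_sum_index]
  · apply Finsupp.sum_congr
    intro f _
    rw [Finsupp.sum_single_index]
    · simp only [neg_add_eq_sub]
    · simp [Finsupp.sum]
  · intro k; simp [Finsupp.sum]
  · intro k b₁ b₂
    simp [Finsupp.sum, add_mul, Finsupp.single_add, Finset.sum_add_distrib]

/-- Let `(X,B)` be a (possibly degenerate) symplectic space and `s ⊆ X` a subspace with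
`s` contained in its symplectic commutant, i.e. `B(f,g) = 0` for all `f, g ∈ s`.  Then the
unitary constraint set `{δ_f : f ∈ s}` in the CCR algebra over `(X,B)` is first class:
there is a (Dirac) state `ω` with `ω (δ_f) = 1` for all `f ∈ s`. -/
theorem stmt_17 {X : Type*} [AddCommGroup X] [Module ℝ X] (B : X → X → ℝ)
    (hBalt : ∀ f g : X, B f g = - B g f)
    (hBadd : ∀ f g h : X, B (f + g) h = B f h + B g h)
    (hBsmul : ∀ (t : ℝ) (f g : X), B (t • f) g = t * B f g)
    (s : Submodule ℝ X) (hs : ∀ f ∈ s, ∀ g ∈ s, B f g = 0) :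
    ∃ ω : (X →₀ ℂ) →ₗ[ℂ] ℂ, IsStateW B ω ∧ ∀ f ∈ s, ω (Finsupp.single f 1) = 1 := by
  classical
  -- Basic consequences of the hypotheses on `B`.
  have hB0 : ∀ g : X, B 0 g = 0 := by
    intro g; have h := hBadd 0 0 g; rw [add_zero] at h; linarith
  have hBneg : ∀ f g : X, B (-f) g = - B f g := by
    intro f g; have h := hBadd f (-f) g; rw [add_neg_cancel, hB0] at h; linarith
  have hBself : ∀ f : X, B f f = 0 := by
    intro f; have h := hBalt f f; linarith
  -- Key symplectic identity needed for the phase computation.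
  have key : ∀ f g x : X, f - x ∈ s → g - x ∈ s →
      B (g - x) x - B (f - x) x = B (-f) g := by
    intro f g x hu hv
    have hf : f = (f - x) + x := by abel
    have hg : g = (g - x) + x := by abel
    rw [hBneg]
    have expand : B f g = B (f - x) (g - x) + B (f - x) x + B x (g - x) + B x x := by
      conv_lhs => rw [hf, hg]
      rw [hBadd]
      have h2 : ∀ u v w : X, B u (v + w) = B u v + B u w := by
        intro u v w; rw [hBalt u (v+w), hBadd, hBalt v u, hBalt w u]; ring
      rw [h2, h2]; ring
    rw [hs _ hu _ hv, hBself, hBalt x (g - x)] at expand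
    linarith
  -- The Dirac state: `ω (δ_f) = 1` iff `f ∈ s`, else `0`.
  set χ : X → ℂ := fun f => if f ∈ s then 1 else 0 with hχ
  set ω := Finsupp.linearCombination ℂ χ with hω
  have hωsingle : ∀ (f : X) (v : ℂ), ω (Finsupp.single f v) = v * χ f := by
    intro f v
    rw [hω, Finsupp.linearCombination_single, smul_eq_mul]
  refine ⟨ω, ⟨?_, ?_, ?_⟩, ?_⟩
  · -- normalization
    rw [hωsingle, hχ]
    simp [Submodule.zero_mem]
  · -- positivity
    intro a
    set A := a.support with hA
    set ρ : X → X := fun f => (Submodule.Quotient.mk f : X ⧸ s).out with hρ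
    have hρmem : ∀ f : X, f - ρ f ∈ s := by
      intro f
      rw [← Submodule.Quotient.eq]
      exact (Quotient.out_eq _).symm
    have hρeq : ∀ f g : X, (Submodule.Quotient.mk f : X ⧸ s) = Submodule.Quotient.mk g →
        ρ f = ρ g := fun f g h => congrArg Quotient.out h
    set c : X → ℂ := fun f => Complex.exp (Complex.I * (B (f - ρ f) (ρ f) : ℂ) / 2) with hc
    set b : X → ℂ := fun f => a f * c f with hb
    set T : X ⧸ s → ℂ := fun q =>
      ∑ f ∈ A.filter (fun f => Submodule.Quotient.mk f = q), b f with hT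
    refine ⟨∑ q ∈ A.image (fun f => (Submodule.Quotient.mk f : X ⧸ s)), Complex.normSq (T q),
      Finset.sum_nonneg fun q _ => Complex.normSq_nonneg _, ?_⟩
    rw [weylMul_star_eq, map_finsuppSum]
    have step1 : (a.sum fun f cc => ω (a.sum fun g d =>
        Finsupp.single (g - f)
          ((starRingEnd ℂ cc) * d * Complex.exp (Complex.I * (B (-f) g : ℂ) / 2))))
        = ∑ f ∈ A, ∑ g ∈ A, (starRingEnd ℂ) (b f) * b g *
            (if (Submodule.Quotient.mk g : X ⧸ s) = Submodule.Quotient.mk f then 1 else 0) := by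
      rw [Finsupp.sum]
      apply Finset.sum_congr rfl
      intro f hf
      rw [map_finsuppSum, Finsupp.sum]
      apply Finset.sum_congr rfl
      intro g hg
      rw [hωsingle]
      simp only [hχ]
      by_cases hgf : g - f ∈ s
      · have hq : (Submodule.Quotient.mk g : X ⧸ s) = Submodule.Quotient.mk f :=
          (Submodule.Quotient.eq s).mpr hgf
        rw [if_pos hgf, if_pos hq]
        have hx : ρ g = ρ f := hρeq g f hq
        have hreal : B (g - ρ f) (ρ f) - B (f - ρ f) (ρ f) = B (-f) g :=
          key f g (ρ f) (hρmem f) (hx ▸ hρmem g)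
        have hcc : (starRingEnd ℂ) (c f) * c g
            = Complex.exp (Complex.I * (B (-f) g : ℂ) / 2) := by
          rw [hc]
          simp only [hx]
          rw [← Complex.exp_conj, ← Complex.exp_add]
          congr 1
          rw [← hreal]
          push_cast
          simp [Complex.conj_I, map_ofNat]
          ring
        rw [hb]
        simp only [map_mul]
        rw [← hcc]
        ring
      · have hq : ¬ ((Submodule.Quotient.mk g : X ⧸ s) = Submodule.Quotient.mk f) := by
          rw [Submodule.Quotient.eq]; exact hgf
        rw [if_neg hgf, if_neg hq, mul_zero, mul_zero]
    rw [step1]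
    have step2 : ∀ f : X, ∑ g ∈ A, (starRingEnd ℂ) (b f) * b g *
        (if (Submodule.Quotient.mk g : X ⧸ s) = Submodule.Quotient.mk f then 1 else 0)
        = (starRingEnd ℂ) (b f) * T (Submodule.Quotient.mk f) := by
      intro f
      rw [hT]
      simp only [Finset.sum_filter, Finset.mul_sum]
      apply Finset.sum_congr rfl
      intro g _
      split_ifs <;> ring
    simp only [step2]
    rw [← Finset.sum_fiberwise_of_maps_to (g := fun f => (Submodule.Quotient.mk f : X ⧸ s))
      (fun f hf => Finset.mem_image_of_mem _ hf)]
    push_cast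
    apply Finset.sum_congr rfl
    intro q hq
    have hfib : ∀ f ∈ A.filter (fun f => (Submodule.Quotient.mk f : X ⧸ s) = q),
        (starRingEnd ℂ) (b f) * T (Submodule.Quotient.mk f) = (starRingEnd ℂ) (b f) * T q := by
      intro f hf
      rw [(Finset.mem_filter.mp hf).2]
    rw [Finset.sum_congr rfl hfib, ← Finset.sum_mul, ← map_sum]
    show (starRingEnd ℂ) (T q) * T q = _
    rw [mul_comm, Complex.mul_conj]
  · -- contractivity
    intro a
    rw [hω, Finsupp.linearCombination_apply, Finsupp.sum, l1Norm, Finsupp.sum]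
    calc ‖∑ f ∈ a.support, a f • χ f‖
        ≤ ∑ f ∈ a.support, ‖a f • χ f‖ := norm_sum_le _ _
      _ ≤ ∑ f ∈ a.support, ‖a f‖ := by
          apply Finset.sum_le_sum
          intro f _
          rw [smul_eq_mul, norm_mul]
          have : ‖χ f‖ ≤ 1 := by
            by_cases h : f ∈ s <;> simp [hχ, h]
          calc ‖a f‖ * ‖χ f‖
              ≤ ‖a f‖ * 1 := by
                exact mul_le_mul_of_nonneg_left this (norm_nonneg _)
            _ = ‖a f‖ := mul_one _
  · -- Dirac property
    intro f hf
    rw [hωsingle]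
    simp [hχ, hf]
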